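/- Let p ≥ 1 and let q be an odd integer with 1 ≤ q < 2p and gcd(q, 2p) = 1. For 1 ≤ j ≤ 2p−1 set ε_j = (−1)^{⌊jq/(2p)⌋}, and let k be the number of indices j with 1 ≤ j ≤ 2p−2 such that ε_j = −1. Let X, X' be matrices in SL_2(C) with tr(X) = tr(X') = 0, set ȳ = −tr(XX'), and let W = (X')^{ε_1}·X^{ε_2}·(X')^{ε_3}·⋯·X^{ε_{2p−2}}·(X')^{ε_{2p−1}} be the alternating word (letters with odd index are powers of X', letters with even index are powers of X). Then tr(X^{-1}·W·X·(X')^{-1}) − tr(W·(X')^{-1}) = (−1)^{k+p−1}·(ȳ² − 4)·S_{p−1}(ȳ), where S_n denotes the Chebyshev polynomials defined by S_0(y) = 1, S_1(y) = y, S_{n+1}(y) = y·S_n(y) − S_{n−1}(y). -/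

import Mathlib

open Matrix

/-- The Chebyshev polynomials `S_n`, as functions `ℂ → ℂ`:
`S_0(y) = 1`, `S_1(y) = y`, `S_{n+1}(y) = y·S_n(y) − S_{n−1}(y)`. -/
noncomputable def chebS : ℕ → ℂ → ℂ
  | 0 => fun _ => 1
  | 1 => fun y => y
  | (n + 2) => fun y => y * chebS (n + 1) y - chebS n y

/-- The sign `ε_j = (−1)^{⌊jq/(2p)⌋}` appearing in the relator word of the
two-bridge link `b(2p, q)`. -/
def twoBridgeSign (p q j : ℕ) : ℤ := (-1) ^ ((j * q) / (2 * p))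

/-- The relator word `W = (X')^{ε_1}·X^{ε_2}·(X')^{ε_3}·⋯·X^{ε_{2p−2}}·(X')^{ε_{2p−1}}`:
letters with odd index are powers of `X'`, letters with even index are powers of `X`. -/
def twoBridgeWord (p q : ℕ) (X X' : Matrix.SpecialLinearGroup (Fin 2) ℂ) :
    Matrix.SpecialLinearGroup (Fin 2) ℂ :=
  ((List.range (2 * p - 1)).map fun i =>
    (if (i + 1) % 2 = 1 then X' else X) ^ twoBridgeSign p q (i + 1)).prod

/- ### Auxiliary lemmas -/

lemma chebS_two (n : ℕ) (y : ℂ) : chebS (n+2) y = y * chebS (n+1) y - chebS n y := rfl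
lemma chebS_zero (y : ℂ) : chebS 0 y = 1 := rfl
lemma chebS_one (y : ℂ) : chebS 1 y = y := rfl

lemma chebS_neg (y : ℂ) : ∀ n, chebS n (-y) = (-1)^n * chebS n y := by
  have H : ∀ n, chebS n (-y) = (-1)^n * chebS n y ∧
      chebS (n+1) (-y) = (-1)^(n+1) * chebS (n+1) y := by
    intro n
    induction n with
    | zero => simp [chebS_zero, chebS_one]
    | succ m ih =>
      refine ⟨ih.2, ?_⟩
      rw [chebS_two, chebS_two, ih.1, ih.2]
      ring
  exact fun n => (H n).1

/-- Cayley–Hamilton for a `2×2` matrix of determinant `1`. -/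
lemma ch2 (D : Matrix (Fin 2) (Fin 2) ℂ) (h : D.det = 1) :
    D * D = (Matrix.trace D) • D - 1 := by
  rw [Matrix.det_fin_two] at h
  rw [← Matrix.ext_iff]
  simp only [Fin.forall_fin_two, Matrix.mul_apply, Fin.sum_univ_two, Matrix.trace_fin_two,
    Matrix.smul_apply, Matrix.sub_apply, Matrix.one_apply, smul_eq_mul]
  norm_num
  refine ⟨⟨by linear_combination -h, by ring⟩, by ring, by linear_combination -h⟩

/-- In `SL₂(ℂ)`, the inverse of a traceless element is its negative (as matrices). -/
lemma inv_eq_neg (X : Matrix.SpecialLinearGroup (Fin 2) ℂ)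
    (hX : Matrix.trace (X : Matrix (Fin 2) (Fin 2) ℂ) = 0) :
    ((X⁻¹ : Matrix.SpecialLinearGroup (Fin 2) ℂ) : Matrix (Fin 2) (Fin 2) ℂ)
      = -(X : Matrix (Fin 2) (Fin 2) ℂ) := by
  rw [Matrix.SpecialLinearGroup.coe_inv, Matrix.adjugate_fin_two]
  rw [Matrix.trace_fin_two] at hX
  rw [← Matrix.ext_iff]
  simp only [Fin.forall_fin_two, Matrix.cons_val', Matrix.cons_val_zero, Matrix.cons_val_one,
    Matrix.head_cons, Matrix.head_fin_const, Matrix.neg_apply, Matrix.of_apply,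
    Matrix.empty_val', Matrix.cons_val_fin_one]
  refine ⟨⟨by linear_combination hX, trivial⟩, trivial, by linear_combination hX⟩

lemma trace_cheb (D : Matrix (Fin 2) (Fin 2) ℂ) (t : ℂ) (ht : Matrix.trace D = t)
    (hD : D * D = t • D - 1) (n : ℕ) :
    Matrix.trace (D^(n+2)) - Matrix.trace (D^n) = (t^2 - 4) * chebS n t := by
  have tr1 : Matrix.trace (1 : Matrix (Fin 2) (Fin 2) ℂ) = 2 := by
    simp [Matrix.trace_one]
  have hrec : ∀ m, Matrix.trace (D^(m+2)) = t * Matrix.trace (D^(m+1)) - Matrix.trace (D^m) := by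
    intro m
    have : D^(m+2) = t • D^(m+1) - D^m := by
      calc D^(m+2) = D^m * (D*D) := by rw [pow_succ, pow_succ, mul_assoc]
      _ = D^m * (t • D - 1) := by rw [hD]
      _ = t • D^(m+1) - D^m := by
        rw [mul_sub, Matrix.mul_smul, mul_one, pow_succ]
    rw [this]
    simp [Matrix.trace_sub, Matrix.trace_smul, smul_eq_mul]
  have h2 : Matrix.trace (D^2) = t^2 - 2 := by
    have := hrec 0
    simp only [zero_add, pow_one, pow_zero, tr1, ht] at this
    rw [this]; ring
  have h3 : Matrix.trace (D^3) = t^3 - 3*t := by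
    have := hrec 1
    simp only [pow_one, ht, h2] at this
    rw [this]; ring
  have H : ∀ n, (Matrix.trace (D^(n+2)) - Matrix.trace (D^n) = (t^2 - 4) * chebS n t) ∧
      (Matrix.trace (D^(n+3)) - Matrix.trace (D^(n+1)) = (t^2 - 4) * chebS (n+1) t) := by
    intro n
    induction n with
    | zero =>
      constructor
      · simp only [zero_add, pow_zero, tr1, h2, chebS_zero]; ring
      · simp only [zero_add, pow_one, h3, ht, chebS_one]; ring
    | succ m ih =>
      refine ⟨ih.2, ?_⟩
      have e1 := hrec (m+2)
      have e2 := hrec m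
      have key : Matrix.trace (D^(m+1+3)) - Matrix.trace (D^(m+1+1)) =
          t * (Matrix.trace (D^(m+3)) - Matrix.trace (D^(m+1))) -
          (Matrix.trace (D^(m+2)) - Matrix.trace (D^m)) := by
        have h4 : m+1+3 = m+2+2 := by ring
        have h5 : m+1+1 = m+2 := by ring
        have h6 : m+2+1 = m+3 := by ring
        rw [h4, h5, e1, e2, h6]; ring
      rw [key, ih.1, ih.2, chebS_two]
      ring
  exact (H n).1

lemma sign_pm (p q j : ℕ) : twoBridgeSign p q j = 1 ∨ twoBridgeSign p q j = -1 := by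
  unfold twoBridgeSign
  rcases Nat.even_or_odd ((j*q)/(2*p)) with h | h
  · exact Or.inl h.neg_one_pow
  · exact Or.inr h.neg_one_pow

lemma list_prod_smul (l : List ℕ) (c : ℕ → ℂ) (M : ℕ → Matrix (Fin 2) (Fin 2) ℂ) :
    (l.map fun i => c i • M i).prod = (l.map c).prod • (l.map M).prod := by
  induction l with
  | nil => simp
  | cons a tl ih =>
    simp only [List.map_cons, List.prod_cons, ih, smul_mul_assoc, mul_smul_comm, smul_smul]
    ring_nf

lemma list_range_prod {M : Type*} [CommMonoid M] (g : ℕ → M) (n : ℕ) :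
    ((List.range n).map g).prod = ∏ i ∈ Finset.range n, g i := by
  induction n with
  | zero => simp
  | succ m ih =>
    rw [List.range_succ, Finset.prod_range_succ, List.map_append, List.prod_append, ih]; simp

lemma prod_sign (s : Finset ℕ) (f : ℕ → ℤ) (h : ∀ j ∈ s, f j = 1 ∨ f j = -1) :
    ∏ j ∈ s, f j = (-1)^(s.filter fun j => f j = -1).card := by
  classical
  induction s using Finset.induction_on with
  | empty => simp
  | insert a s' hnotmem ih0 =>
    rw [Finset.prod_insert hnotmem, Finset.filter_insert]
    have ha := h a (Finset.mem_insert_self a s')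
    have hrest := ih0 (fun j hj => h j (Finset.mem_insert_of_mem hj))
    rcases ha with ha | ha
    · rw [if_neg (by rw [ha]; decide), hrest, ha, one_mul]
    · rw [if_pos ha,
        Finset.card_insert_of_notMem (fun hc => hnotmem (Finset.mem_of_mem_filter a hc)),
        hrest, ha, pow_succ]
      ring

lemma filter_card_shift (P : ℕ → Prop) [DecidablePred P] (N : ℕ) :
    ((Finset.range N).filter fun i => P (i+1)).card = ((Finset.Icc 1 N).filter P).card := by
  induction N with
  | zero => simp
  | succ m ih =>
    rw [Finset.range_add_one, (Finset.insert_Icc_right_eq_Icc_add_one (by omega)).symm, Finset.filter_insert,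
      Finset.filter_insert]
    by_cases h : P (m+1)
    · rw [if_pos h, if_pos h, Finset.card_insert_of_notMem (by simp),
        Finset.card_insert_of_notMem (by simp), ih]
    · rw [if_neg h, if_neg h, ih]

lemma alt_prod (A B : Matrix (Fin 2) (Fin 2) ℂ) (m : ℕ) :
    ((List.range (2*m+1)).map fun i =>
      (if (i+1) % 2 = 1 then B else A)).prod = (B*A)^m * B := by
  induction m with
  | zero => simp [List.range_succ]
  | succ r ih =>
    have h1 : 2*(r+1)+1 = (2*r+1) + 1 + 1 := by ring
    rw [h1, List.range_succ, List.range_succ, List.map_append, List.map_append,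
      List.prod_append, List.prod_append, ih]
    simp only [List.map_cons, List.map_nil, List.prod_cons, List.prod_nil, mul_one]
    rw [if_neg (by omega : ¬ (2*r+1+1) % 2 = 1), if_pos (by omega : (2*r+1+1+1) % 2 = 1)]
    simp only [pow_succ, mul_assoc]

/-- The coercion `SL₂(ℂ) → Matrix` as a monoid homomorphism. -/
def sl2coe : Matrix.SpecialLinearGroup (Fin 2) ℂ →* Matrix (Fin 2) (Fin 2) ℂ where
  toFun g := (g : Matrix (Fin 2) (Fin 2) ℂ)
  map_one' := rfl
  map_mul' _ _ := rfl

/-- The value of the last sign `ε_{2p−1}`. -/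
lemma last_sign (m q : ℕ) (hq_odd : Odd q) (hq1 : 1 ≤ q) (hq2 : q < 2 * (m+1)) :
    twoBridgeSign (m+1) q (2*m+1) = 1 := by
  unfold twoBridgeSign
  have key : ((2*m+1)*q) / (2*(m+1)) = q - 1 := by
    have e : q * (2*(m+1)) = (2*m+1)*q + q := by ring
    have h2 : 2*(m+1) ≤ q * (2*(m+1)) := Nat.le_mul_of_pos_left _ (by omega)
    have h3 : (q-1)*(2*(m+1)) = q*(2*(m+1)) - (2*(m+1)) := by
      rw [Nat.sub_mul, one_mul]
    have h4 : (2*m+1)*q = (2*(m+1) - q) + (q-1)*(2*(m+1)) := by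
      rw [h3]; omega
    rw [h4, Nat.add_mul_div_right _ _ (by omega : 0 < 2*(m+1)),
      Nat.div_eq_of_lt (by omega), zero_add]
  rw [key]
  obtain ⟨r, hr⟩ := hq_odd
  exact Even.neg_one_pow ⟨r, by omega⟩

/- ### Main theorem -/

/-- For the two-bridge link `b(2p, q)` with `q` odd, `1 ≤ q < 2p`, `gcd(q, 2p) = 1`,
traceless `X, X' ∈ SL₂(ℂ)`, `ȳ = −tr(XX')`, and `k` the number of `1 ≤ j ≤ 2p−2` with
`ε_j = −1`, one has
`tr(X⁻¹·W·X·(X')⁻¹) − tr(W·(X')⁻¹) = (−1)^{k+p−1}·(ȳ² − 4)·S_{p−1}(ȳ)`. -/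
theorem twoBridge_trace_difference (p q : ℕ) (hp : 1 ≤ p) (hq_odd : Odd q)
    (hq1 : 1 ≤ q) (hq2 : q < 2 * p) (hgcd : Nat.gcd q (2 * p) = 1)
    (X X' : Matrix.SpecialLinearGroup (Fin 2) ℂ)
    (hX : Matrix.trace (X : Matrix (Fin 2) (Fin 2) ℂ) = 0)
    (hX' : Matrix.trace ((X' : Matrix (Fin 2) (Fin 2) ℂ)) = 0)
    (y : ℂ)
    (hy : y = -Matrix.trace ((X * X' : Matrix.SpecialLinearGroup (Fin 2) ℂ) :
      Matrix (Fin 2) (Fin 2) ℂ))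
    (k : ℕ)
    (hk : k = ((Finset.Icc 1 (2 * p - 2)).filter fun j => twoBridgeSign p q j = -1).card) :
    Matrix.trace ((X⁻¹ * twoBridgeWord p q X X' * X * X'⁻¹ :
        Matrix.SpecialLinearGroup (Fin 2) ℂ) : Matrix (Fin 2) (Fin 2) ℂ) -
      Matrix.trace ((twoBridgeWord p q X X' * X'⁻¹ :
        Matrix.SpecialLinearGroup (Fin 2) ℂ) : Matrix (Fin 2) (Fin 2) ℂ) =
    (-1 : ℂ) ^ (k + p - 1) * (y ^ 2 - 4) * chebS (p - 1) y := by
  classical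
  obtain ⟨m, rfl⟩ : ∃ m, p = m + 1 := ⟨p - 1, by omega⟩
  set A : Matrix (Fin 2) (Fin 2) ℂ := (X : Matrix (Fin 2) (Fin 2) ℂ) with hAdef
  set B : Matrix (Fin 2) (Fin 2) ℂ := (X' : Matrix (Fin 2) (Fin 2) ℂ) with hBdef
  have hdetA : A.det = 1 := X.2
  have hdetB : B.det = 1 := X'.2
  have hA2 : A * A = -1 := by
    have := ch2 A hdetA
    rw [hX] at this  -- trace A = 0
    simpa using this
  have hB2 : B * B = -1 := by
    have := ch2 B hdetB
    rw [hX'] at this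
    simpa using this
  have hXinv : ((X⁻¹ : Matrix.SpecialLinearGroup (Fin 2) ℂ) : Matrix (Fin 2) (Fin 2) ℂ) = -A :=
    inv_eq_neg X hX
  have hX'inv : ((X'⁻¹ : Matrix.SpecialLinearGroup (Fin 2) ℂ) : Matrix (Fin 2) (Fin 2) ℂ) = -B :=
    inv_eq_neg X' hX'
  -- the trace of B*A
  have htBA : Matrix.trace (B*A) = -y := by
    rw [Matrix.trace_mul_comm, hy]
    simp [Matrix.SpecialLinearGroup.coe_mul, hAdef, hBdef]
  have hdetBA : (B*A).det = 1 := by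
    rw [Matrix.det_mul, hdetA, hdetB, mul_one]
  have hBA2 : (B*A) * (B*A) = (-y) • (B*A) - 1 := by
    have := ch2 (B*A) hdetBA
    rw [htBA] at this
    exact this
  -- decompose the word
  have hlen : 2 * (m+1) - 1 = 2*m+1 := by omega
  have hword : ((twoBridgeWord (m+1) q X X' : Matrix.SpecialLinearGroup (Fin 2) ℂ) :
      Matrix (Fin 2) (Fin 2) ℂ) = ((-1 : ℂ)^k) • ((B*A)^m * B) := by
    unfold twoBridgeWord
    rw [hlen]
    rw [show ((((List.range (2*m+1)).map fun i =>
        (if (i + 1) % 2 = 1 then X' else X) ^ twoBridgeSign (m+1) q (i + 1)).prod :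
        Matrix.SpecialLinearGroup (Fin 2) ℂ) : Matrix (Fin 2) (Fin 2) ℂ) =
        sl2coe (((List.range (2*m+1)).map fun i =>
        (if (i + 1) % 2 = 1 then X' else X) ^ twoBridgeSign (m+1) q (i + 1)).prod) from rfl,
      map_list_prod, List.map_map]
    have hfun : (sl2coe ∘ fun i =>
        (if (i + 1) % 2 = 1 then X' else X) ^ twoBridgeSign (m+1) q (i + 1)) =
        fun i => ((twoBridgeSign (m+1) q (i+1) : ℤ) : ℂ) •
          (if (i + 1) % 2 = 1 then B else A) := by
      funext i
      simp only [Function.comp_apply]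
      have hcoe : ((((if (i + 1) % 2 = 1 then X' else X) :
          Matrix.SpecialLinearGroup (Fin 2) ℂ)) : Matrix (Fin 2) (Fin 2) ℂ) =
          (if (i + 1) % 2 = 1 then B else A) := by
        by_cases h : (i+1) % 2 = 1 <;> simp [h, hAdef, hBdef]
      have htr : Matrix.trace (((if (i + 1) % 2 = 1 then X' else X) :
          Matrix.SpecialLinearGroup (Fin 2) ℂ) : Matrix (Fin 2) (Fin 2) ℂ) = 0 := by
        by_cases h : (i+1) % 2 = 1 <;> simp [h, ← hAdef, ← hBdef, hX, hX']
      rcases sign_pm (m+1) q (i+1) with hs | hs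
      · rw [hs, zpow_one]
        show _ = ((1 : ℤ) : ℂ) • _
        rw [← hcoe]
        simp [sl2coe]
      · rw [hs, _root_.zpow_neg_one]
        show (((if (i + 1) % 2 = 1 then X' else X)⁻¹ :
          Matrix.SpecialLinearGroup (Fin 2) ℂ) : Matrix (Fin 2) (Fin 2) ℂ) = _
        rw [inv_eq_neg _ htr, hcoe]
        simp only [Int.cast_neg, Int.cast_one, neg_smul, one_smul]
    rw [hfun, list_prod_smul, alt_prod]
    congr 1
    -- the scalar product of signs is (-1)^k
    rw [list_range_prod]
    have cast_prod : (∏ i ∈ Finset.range (2*m+1), ((twoBridgeSign (m+1) q (i+1) : ℤ) : ℂ)) =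
        (((∏ i ∈ Finset.range (2*m+1), twoBridgeSign (m+1) q (i+1)) : ℤ) : ℂ) := by
      push_cast; ring
    rw [cast_prod,
      prod_sign _ _ (fun j _ => sign_pm (m+1) q (j+1))]
    have hcard : ((Finset.range (2*m+1)).filter
        fun i => twoBridgeSign (m+1) q (i+1) = -1).card = k := by
      rw [Finset.range_add_one, Finset.filter_insert,
        if_neg (by rw [last_sign m q hq_odd hq1 hq2]; decide),
        filter_card_shift (fun j => twoBridgeSign (m+1) q j = -1) (2*m), hk,
        show 2*(m+1)-2 = 2*m by omega]
    rw [hcard]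
    push_cast
    ring
  -- compute the two traces
  have term1 : Matrix.trace ((X⁻¹ * twoBridgeWord (m+1) q X X' * X * X'⁻¹ :
      Matrix.SpecialLinearGroup (Fin 2) ℂ) : Matrix (Fin 2) (Fin 2) ℂ) =
      ((-1:ℂ)^k) * Matrix.trace ((B*A)^(m+2)) := by
    rw [show ((X⁻¹ * twoBridgeWord (m+1) q X X' * X * X'⁻¹ :
        Matrix.SpecialLinearGroup (Fin 2) ℂ) : Matrix (Fin 2) (Fin 2) ℂ) =
        ((X⁻¹ : Matrix.SpecialLinearGroup (Fin 2) ℂ) : Matrix (Fin 2) (Fin 2) ℂ) *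
        ((twoBridgeWord (m+1) q X X' : Matrix.SpecialLinearGroup (Fin 2) ℂ) :
          Matrix (Fin 2) (Fin 2) ℂ) * A *
        ((X'⁻¹ : Matrix.SpecialLinearGroup (Fin 2) ℂ) : Matrix (Fin 2) (Fin 2) ℂ) from rfl,
      hXinv, hX'inv, hword]
    have : (-A) * (((-1:ℂ)^k) • ((B*A)^m * B)) * A * (-B) =
        ((-1:ℂ)^k) • (A * ((B*A)^m * B * A * B)) := by
      simp only [smul_mul_assoc, mul_smul_comm, neg_mul, mul_neg, neg_neg, smul_neg]
      congr 1
      simp only [mul_assoc]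
    rw [this, Matrix.trace_smul, smul_eq_mul, Matrix.trace_mul_comm]
    congr 2
    calc (B*A)^m * B * A * B * A = (B*A)^m * (B*A) * (B*A) := by
          simp only [mul_assoc]
    _ = (B*A)^(m+2) := by rw [pow_succ, pow_succ]
  have term2 : Matrix.trace ((twoBridgeWord (m+1) q X X' * X'⁻¹ :
      Matrix.SpecialLinearGroup (Fin 2) ℂ) : Matrix (Fin 2) (Fin 2) ℂ) =
      ((-1:ℂ)^k) * Matrix.trace ((B*A)^m) := by
    rw [show ((twoBridgeWord (m+1) q X X' * X'⁻¹ :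
        Matrix.SpecialLinearGroup (Fin 2) ℂ) : Matrix (Fin 2) (Fin 2) ℂ) =
        ((twoBridgeWord (m+1) q X X' : Matrix.SpecialLinearGroup (Fin 2) ℂ) :
          Matrix (Fin 2) (Fin 2) ℂ) *
        ((X'⁻¹ : Matrix.SpecialLinearGroup (Fin 2) ℂ) : Matrix (Fin 2) (Fin 2) ℂ) from rfl,
      hX'inv, hword]
    have : (((-1:ℂ)^k) • ((B*A)^m * B)) * (-B) = ((-1:ℂ)^k) • ((B*A)^m) := by
      rw [smul_mul_assoc, mul_neg, mul_assoc, hB2]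
      simp
    rw [this, Matrix.trace_smul, smul_eq_mul]
  rw [term1, term2, ← mul_sub, trace_cheb (B*A) (-y) htBA hBA2 m, chebS_neg]
  have hexp : k + (m+1) - 1 = k + m := by omega
  have hm : m + 1 - 1 = m := by omega
  rw [hexp, hm, pow_add]
  ring
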